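/- Let p be an odd prime, q a power of p, and d = (q+1)/2. Then in the polynomial ring k[X] over any field k of characteristic p, the identity 2·φ_d(X) = (X + 2)^d + (X − 2)^d holds, where φ_d is the d-th Chebyshev polynomial. -/

import Mathlib

open Polynomial

/-- For `p` an odd prime, `q` a power of `p` and `d = (q+1)/2`,
in `k[X]` over any field `k` of characteristic `p` one has
`2 φ_d(X) = (X + 2)^d + (X - 2)^d`, where `φ_d = dickson 1 1 d` is the
`d`-th Chebyshev polynomial. -/
theorem stmt1 (p r q d : ℕ) (hp : p.Prime) (hodd : Odd p) (hr : 1 ≤ r)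
    (hq : q = p ^ r) (hd : 2 * d = q + 1)
    (k : Type*) [Field k] [CharP k p] :
    (2 : k[X]) * dickson 1 1 d = (X + 2) ^ d + (X - 2) ^ d := by
  have hp2 : p ≠ 2 := by
    rintro rfl
    exact (Nat.not_odd_iff_even.2 even_two) hodd
  haveI : Fact p.Prime := ⟨hp⟩
  haveI : CharP (AlgebraicClosure k) p := charP_of_injective_algebraMap (algebraMap k (AlgebraicClosure k)).injective p
  haveI : ExpChar (AlgebraicClosure k) p := ExpChar.prime hp
  have h2K : (2 : (AlgebraicClosure k)) ≠ 0 := by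
    have := (CharP.cast_eq_zero_iff (AlgebraicClosure k) p 2)
    intro h
    have h2 : (p : ℕ) ∣ 2 := this.1 (by exact_mod_cast h)
    exact hp2 ((Nat.prime_dvd_prime_iff_eq hp Nat.prime_two).1 h2)
  apply Polynomial.map_injective (algebraMap k (AlgebraicClosure k)) (algebraMap k (AlgebraicClosure k)).injective
  simp only [Polynomial.map_mul, Polynomial.map_add, Polynomial.map_pow,
    Polynomial.map_sub, Polynomial.map_X, Polynomial.map_ofNat, map_dickson, map_one]
  apply Polynomial.funext
  intro z
  -- find t with t + t⁻¹ = z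
  obtain ⟨w, hw⟩ : ∃ w : (AlgebraicClosure k), w ^ 2 = z ^ 2 - 4 :=
    IsAlgClosed.exists_pow_nat_eq _ (by norm_num)
  set t : (AlgebraicClosure k) := (z + w) / 2 with ht
  set u : (AlgebraicClosure k) := (z - w) / 2 with hu
  have htu : t * u = 1 := by
    rw [ht, hu]
    field_simp
    linear_combination -hw
  have hzt : z = t + u := by rw [ht, hu]; field_simp; ring
  have ht0 : t ≠ 0 := left_ne_zero_of_mul_eq_one htu
  obtain ⟨s, hs⟩ : ∃ s : (AlgebraicClosure k), s ^ 2 = t := IsAlgClosed.exists_pow_nat_eq _ (by norm_num)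
  have hs0 : s ≠ 0 := by
    intro h; rw [h] at hs; simp at hs; exact ht0 hs.symm
  have hu' : u = (s⁻¹) ^ 2 := by
    have : t * ((s⁻¹) ^ 2) = 1 := by
      rw [← hs]; field_simp
    exact (mul_left_cancel₀ ht0 (htu.trans this.symm))
  -- evaluate
  rw [hzt]
  simp only [eval_mul, eval_add, eval_pow, eval_sub, eval_X, eval_ofNat,
    dickson_one_one_eval_add_inv t u htu]
  have hadd : t + u + 2 = (s + s⁻¹) ^ 2 := by
    rw [← hs, hu']; field_simp; ring
  have hsub : t + u - 2 = (s - s⁻¹) ^ 2 := by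
    rw [← hs, hu']; field_simp; ring
  have hd2 : d * 2 = p ^ r + 1 := by omega
  have hd2' : 2 * d = p ^ r + 1 := by omega
  rw [hadd, hsub, ← pow_mul, ← pow_mul]
  simp only [hd2, hd2']
  rw [pow_succ, add_pow_char_pow, pow_succ, sub_pow_char_pow]
  rw [← hs, hu', ← pow_mul, ← pow_mul]
  simp only [hd2, hd2']
  have hsi : (s⁻¹) ^ (p ^ r) = (s ^ (p ^ r))⁻¹ := by rw [inv_pow]
  rw [hsi]
  have hsq0 : s ^ (p ^ r) ≠ 0 := pow_ne_zero _ hs0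
  field_simp
  rw [one_div, inv_pow]
  have h1 : s ^ (p ^ r + 1) ≠ 0 := pow_ne_zero _ hs0
  linear_combination 2 * mul_inv_cancel₀ h1
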